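/- Let 1 ≤ q ≤ p < ∞ with 1 < p, and let X be a Banach space with the (p,q)-Dunford–Pettis property. Then X has the p-Dunford–Pettis property, i.e., the (p,p)-Dunford–Pettis property. -/

import Mathlib

open NormedSpace ENNReal

noncomputable section

/-- A sequence `x` in a normed space is weakly `p`-summable if
`∑ₙ |f (x n)|^p < ∞` for every continuous functional `f`. -/
def WeaklySummable (p : ℝ) {X : Type*} [NormedAddCommGroup X] [NormedSpace ℝ X]
    (x : ℕ → X) : Prop :=
  ∀ f : StrongDual ℝ X, Summable fun n => |f (x n)| ^ p

/-- `X` has the `(p, q)`-Dunford–Pettis property if for every weakly `q`-summable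
sequence `x` in `X` and weakly `p`-summable sequence `f` in `X*`,
`∑ₙ (∑ₖ |fₖ (xₙ)|^p)^(q/p) < ∞`. -/
def DPP (p q : ℝ) (X : Type*) [NormedAddCommGroup X] [NormedSpace ℝ X] : Prop :=
  ∀ x : ℕ → X, WeaklySummable q x → ∀ f : ℕ → StrongDual ℝ X, WeaklySummable p f →
    Summable fun n => (∑' k, |f k (x n)| ^ p) ^ (q / p)

/-- `X` has the `p`-Dunford–Pettis property if for every weakly `p`-summable
sequence `x` in `X` and weakly `p`-summable sequence `f` in `X*`,
`∑ₙ ∑ₖ |fₖ (xₙ)|^p < ∞`. -/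
def PDPP (p : ℝ) (X : Type*) [NormedAddCommGroup X] [NormedSpace ℝ X] : Prop :=
  ∀ x : ℕ → X, WeaklySummable p x → ∀ f : ℕ → StrongDual ℝ X, WeaklySummable p f →
    Summable fun n => ∑' k, |f k (x n)| ^ p

lemma aux_key {σ x : ℝ} (hσ : 0 < σ) (hx : 0 < x) :
    1 + σ ≤ x ^ (-σ) + σ * x := by
  have hw : (1/(1+σ)) + (σ/(1+σ)) = 1 := by field_simp
  have h := Real.geom_mean_le_arith_mean2_weighted (by positivity) (by positivity)
    (Real.rpow_nonneg hx.le (-σ)) hx.le hw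
  have hgm : (x ^ (-σ)) ^ (1/(1+σ)) * x ^ (σ/(1+σ)) = 1 := by
    rw [← Real.rpow_mul hx.le, ← Real.rpow_add hx,
      show -σ * (1/(1+σ)) + σ/(1+σ) = 0 by field_simp; ring, Real.rpow_zero]
  rw [hgm] at h
  have h1σ : 0 < 1 + σ := by linarith
  have h2 := mul_le_mul_of_nonneg_right h h1σ.le
  have he : (1/(1+σ) * x ^ (-σ) + σ/(1+σ) * x) * (1+σ) = x ^ (-σ) + σ * x := by
    field_simp
  rw [he, one_mul] at h2
  linarith

lemma aux2 {σ c B : ℝ} (hσ : 0 < σ) (hc : 0 < c) (hcB : c ≤ B) :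
    (B - c) / B ^ (1+σ) ≤ (c ^ (-σ) - B ^ (-σ)) / σ := by
  have hB : 0 < B := lt_of_lt_of_le hc hcB
  have hx : 0 < c / B := by positivity
  have key := aux_key hσ hx
  have hdr : (c / B) ^ (-σ) = c ^ (-σ) * B ^ σ := by
    rw [div_eq_mul_inv, Real.mul_rpow hc.le (by positivity), ← Real.rpow_neg_one B,
      ← Real.rpow_mul hB.le]
    ring_nf
  rw [hdr] at key
  have hBs : 0 < B ^ σ := Real.rpow_pos_of_pos hB σ
  have hBr : B ^ (1+σ) = B * B ^ σ := by
    rw [Real.rpow_add hB, Real.rpow_one]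
  have hBn : B ^ (-σ) = (B ^ σ)⁻¹ := by rw [Real.rpow_neg hB.le]
  rw [hBr, hBn, div_le_div_iff₀ (by positivity) hσ]
  have hkeyB : (1 + σ) * B ≤ c ^ (-σ) * B ^ σ * B + σ * c := by
    have h3 := mul_le_mul_of_nonneg_right key hB.le
    have he : (c ^ (-σ) * B ^ σ + σ * (c/B)) * B = c ^ (-σ) * B ^ σ * B + σ * c := by
      field_simp
    linarith [he ▸ h3]
  have hinv : (B ^ σ)⁻¹ * (B * B ^ σ) = B := by field_simp
  nlinarith [mul_pos hB hBs]

/-- If `1 ≤ q ≤ p` and `X` has the `(p, q)`-Dunford–Pettis property, then `X` has the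
`p`-Dunford–Pettis property. -/
theorem stmt_11 {X : Type*} [NormedAddCommGroup X] [NormedSpace ℝ X] [CompleteSpace X]
    (p q : ℝ) (hq : 1 ≤ q) (hqp : q ≤ p) (hp : 1 < p)
    (h : DPP p q X) : PDPP p X := by
  intro x hx f hf
  have hp0 : (0:ℝ) < p := by linarith
  have hq0 : (0:ℝ) < q := by linarith
  rcases eq_or_lt_of_le hqp with rfl | hqplt
  · -- q = p
    have := h x hx f hf
    simpa [div_self hq0.ne', Real.rpow_one] using this
  -- q < p
  by_contra hns
  set s : ℕ → ℝ := fun n => ∑' k, |f k (x n)| ^ p with hsdef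
  have hs0 : ∀ n, 0 ≤ s n := fun n =>
    tsum_nonneg fun k => Real.rpow_nonneg (abs_nonneg _) p
  set P : ℕ → ℝ := fun n => 1 + ∑ k ∈ Finset.range n, s k with hPdef
  have hP1 : ∀ n, 1 ≤ P n := by
    intro n
    have : 0 ≤ ∑ k ∈ Finset.range n, s k := Finset.sum_nonneg fun k _ => hs0 k
    simp only [hPdef]; linarith
  have hPpos : ∀ n, 0 < P n := fun n => lt_of_lt_of_le one_pos (hP1 n)
  have hPsucc : ∀ n, P (n+1) = P n + s n := by
    intro n; simp only [hPdef, Finset.sum_range_succ]; ring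
  have hPle : ∀ n, P n ≤ P (n+1) := fun n => by rw [hPsucc]; linarith [hs0 n]
  have hPtop : Filter.Tendsto P Filter.atTop Filter.atTop := by
    have h1 : ¬ Summable s := hns
    have h2 := (summable_iff_not_tendsto_nat_atTop_of_nonneg hs0).not.mp h1
    rw [not_not] at h2
    simpa only [hPdef] using Filter.tendsto_atTop_add_const_left _ 1 h2
  set r : ℝ := p / (p - q) with hrdef
  have hpq0 : (0:ℝ) < p - q := by linarith
  have hr1 : 1 < r := by
    rw [hrdef, lt_div_iff₀ hpq0]; linarith
  have hσ : 0 < r - 1 := by linarith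
  set u : ℕ → ℝ := fun n => s n ^ ((p - q)/p) / P (n+1) with hudef
  have hu0 : ∀ n, 0 ≤ u n := fun n => by
    have := hs0 n; have := (hPpos (n+1)).le; positivity
  set t : ℕ → ℝ := fun n => u n ^ (1/q) with htdef
  have ht0 : ∀ n, 0 ≤ t n := fun n => Real.rpow_nonneg (hu0 n) _
  -- u n ^ r = s n / P (n+1) ^ r
  have hur : ∀ n, u n ^ r = s n / P (n+1) ^ r := by
    intro n
    rw [hudef]
    rw [Real.div_rpow (Real.rpow_nonneg (hs0 n) _) (hPpos (n+1)).le,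
      ← Real.rpow_mul (hs0 n), show (p - q)/p * r = 1 by rw [hrdef]; field_simp,
      Real.rpow_one]
  -- Summability of u ^ r
  have hsummur : Summable fun n => u n ^ r := by
    apply summable_of_sum_range_le (c := 1 / (r - 1))
      (fun n => Real.rpow_nonneg (hu0 n) r)
    intro N
    have hterm : ∀ n, u n ^ r ≤ (P n ^ (-(r-1)) - P (n+1) ^ (-(r-1))) / (r - 1) := by
      intro n
      rw [hur n]
      have := aux2 hσ (hPpos n) (hPle n)
      rw [show (1 : ℝ) + (r - 1) = r by ring] at this
      calc s n / P (n+1) ^ r = (P (n+1) - P n) / P (n+1) ^ r := by rw [hPsucc]; ring_nf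
        _ ≤ (P n ^ (-(r-1)) - P (n+1) ^ (-(r-1))) / (r - 1) := this
    calc ∑ n ∈ Finset.range N, u n ^ r
        ≤ ∑ n ∈ Finset.range N, (P n ^ (-(r-1)) - P (n+1) ^ (-(r-1))) / (r - 1) :=
          Finset.sum_le_sum fun n _ => hterm n
      _ = (∑ n ∈ Finset.range N, (P n ^ (-(r-1)) - P (n+1) ^ (-(r-1)))) / (r - 1) := by
          rw [Finset.sum_div]
      _ = (P 0 ^ (-(r-1)) - P N ^ (-(r-1))) / (r - 1) := by
          rw [Finset.sum_range_sub' (fun n => P n ^ (-(r-1)))]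
      _ ≤ 1 / (r - 1) := by
          apply div_le_div_of_nonneg_right _ hσ.le
          have h1 : P 0 ^ (-(r-1)) ≤ 1 := by
            simp only [hPdef, Finset.range_zero, Finset.sum_empty, add_zero]
            rw [Real.one_rpow]
          have h2 : 0 ≤ P N ^ (-(r-1)) := Real.rpow_nonneg (hPpos N).le _
          linarith
  -- the scaled sequence
  set y : ℕ → X := fun n => t n • x n with hydef
  have hconj : Real.HolderConjugate r (p/q) := by
    rw [Real.holderConjugate_iff]
    constructor
    · exact hr1
    · rw [hrdef]
      field_simp
      ring
  have hyws : WeaklySummable q y := by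
    intro g
    have hgy : ∀ n, |g (y n)| ^ q = u n * |g (x n)| ^ q := by
      intro n
      have h1 : g (y n) = t n * g (x n) := by
        simp only [hydef, map_smul, smul_eq_mul]
      rw [h1, abs_mul, abs_of_nonneg (ht0 n),
        Real.mul_rpow (ht0 n) (abs_nonneg _), htdef,
        ← Real.rpow_mul (hu0 n), one_div, inv_mul_cancel₀ hq0.ne', Real.rpow_one]
    have hmaj : Summable fun n => u n ^ r / r + (|g (x n)| ^ p) / (p/q) := by
      exact (hsummur.div_const r).add ((hx g).div_const (p/q))
    apply Summable.of_nonneg_of_le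
      (fun n => Real.rpow_nonneg (abs_nonneg _) q) _ hmaj
    intro n
    rw [hgy n]
    have hyoung := Real.young_inequality_of_nonneg (hu0 n)
      (Real.rpow_nonneg (abs_nonneg (g (x n))) q) hconj
    have hqp' : (|g (x n)| ^ q) ^ (p/q) = |g (x n)| ^ p := by
      rw [← Real.rpow_mul (abs_nonneg _), show q * (p/q) = p by field_simp]
    rw [hqp'] at hyoung
    exact hyoung
  have hD := h y hyws f hf
  have hDeq : ∀ n, (∑' k, |f k (y n)| ^ p) ^ (q/p) = s n / P (n+1) := by
    intro n
    have h1 : ∀ k, |f k (y n)| ^ p = t n ^ p * |f k (x n)| ^ p := by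
      intro k
      have : f k (y n) = t n * f k (x n) := by
        simp only [hydef, map_smul, smul_eq_mul]
      rw [this, abs_mul, abs_of_nonneg (ht0 n), Real.mul_rpow (ht0 n) (abs_nonneg _)]
    have h2 : (∑' k, |f k (y n)| ^ p) = t n ^ p * s n := by
      simp only [h1]
      rw [tsum_mul_left]
    rw [h2, Real.mul_rpow (Real.rpow_nonneg (ht0 n) p) (hs0 n),
      ← Real.rpow_mul (ht0 n), show p * (q/p) = q by field_simp, htdef,
      ← Real.rpow_mul (hu0 n), one_div, inv_mul_cancel₀ hq0.ne', Real.rpow_one, hudef]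
    rw [div_mul_eq_mul_div,
      ← Real.rpow_add' (hs0 n) (by rw [show (p-q)/p + q/p = 1 by field_simp; ring]; norm_num),
      show (p-q)/p + q/p = 1 by field_simp; ring, Real.rpow_one]
  have hD' : Summable fun n => s n / P (n+1) := by
    have : (fun n => (∑' k, |f k (y n)| ^ p) ^ (q/p)) = fun n => s n / P (n+1) :=
      funext hDeq
    rwa [this] at hD
  -- contradiction: tails of the series are bounded below by 1
  set g : ℕ → ℝ := fun n => s n / P (n+1) with hgdef
  set S : ℕ → ℝ := fun N => ∑ n ∈ Finset.range N, g n with hSdef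
  have hStend : Filter.Tendsto S Filter.atTop (nhds (∑' n, g n)) :=
    hD'.hasSum.tendsto_sum_nat
  have hPmono : Monotone P := monotone_nat_of_le_succ hPle
  have hkey : ∀ m, S m + 1 ≤ ∑' n, g n := by
    intro m
    have hev : ∀ᶠ M in Filter.atTop, 1 - P m / P M ≤ S M - S m := by
      filter_upwards [Filter.eventually_ge_atTop m] with M hmM
      have h1 : S M - S m = ∑ n ∈ Finset.Ico m M, g n := by
        rw [hSdef]
        simp only
        rw [Finset.sum_Ico_eq_sub _ hmM]
      have h2 : ∑ n ∈ Finset.Ico m M, s n / P M ≤ ∑ n ∈ Finset.Ico m M, g n := by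
        apply Finset.sum_le_sum
        intro n hn
        have hnM : n + 1 ≤ M := Finset.mem_Ico.mp hn |>.2
        have hle : P (n+1) ≤ P M := hPmono hnM
        exact div_le_div_of_nonneg_left (hs0 n) (hPpos (n+1)) hle
      have h3 : ∑ n ∈ Finset.Ico m M, s n / P M = (P M - P m) / P M := by
        rw [← Finset.sum_div]
        congr 1
        have h4 := Finset.sum_Ico_eq_sub s hmM
        rw [h4]
        simp only [hPdef]
        ring
      have h5 : 1 - P m / P M = (P M - P m) / P M := by
        rw [sub_div, div_self (hPpos M).ne']
      rw [h1, h5]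
      rw [h3] at h2
      exact h2
    have hlim1 : Filter.Tendsto (fun M => 1 - P m / P M) Filter.atTop (nhds 1) := by
      have hd : Filter.Tendsto (fun M => P m / P M) Filter.atTop (nhds 0) :=
        Filter.Tendsto.div_atTop tendsto_const_nhds hPtop
      simpa using tendsto_const_nhds.sub hd
    have hlim2 : Filter.Tendsto (fun M => S M - S m) Filter.atTop
        (nhds (∑' n, g n - S m)) := hStend.sub_const _
    have h6 := le_of_tendsto_of_tendsto hlim1 hlim2 hev
    linarith
  have h7 : Filter.Tendsto (fun m => S m + 1) Filter.atTop (nhds (∑' n, g n + 1)) :=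
    hStend.add_const 1
  have h8 : (∑' n, g n) + 1 ≤ ∑' n, g n :=
    le_of_tendsto h7 (Filter.Eventually.of_forall hkey)
  linarith
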